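/- Let V₁, V₂, V₃ be closed subspaces of a Hilbert space with ε_{ij} = cos ∠(V_i, V_j) (Friedrichs angles) satisfying ε₁₂ < 1. Then cos² ∠(V₁ + V₂, V₃) ≤ (ε₁₃² + ε₂₃² + 2 ε₁₂ ε₂₃ ε₁₃)/(1 − ε₁₂²), provided V₁ + V₂ is closed (which holds when ∠(V₁,V₂) > 0). -/

import Mathlib

open scoped RealInnerProductSpace

/-- The cosine of the Friedrichs angle between two subspaces. -/
noncomputable def friedrichsCos {H : Type*} [NormedAddCommGroup H] [InnerProductSpace ℝ H]
    (V₁ V₂ : Submodule ℝ H) : ℝ :=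
  sSup {r : ℝ | ∃ v₁ v₂ : H, v₁ ∈ V₁ ∧ v₂ ∈ V₂ ∧ ‖v₁‖ = 1 ∧ ‖v₂‖ = 1 ∧
    v₁ ∈ (V₁ ⊓ V₂)ᗮ ∧ v₂ ∈ (V₁ ⊓ V₂)ᗮ ∧ r = |⟪v₁, v₂⟫|}

section Aux

variable {H : Type*} [NormedAddCommGroup H] [InnerProductSpace ℝ H]

lemma fcSet_bddAbove (V₁ V₂ : Submodule ℝ H) :
    BddAbove {r : ℝ | ∃ v₁ v₂ : H, v₁ ∈ V₁ ∧ v₂ ∈ V₂ ∧ ‖v₁‖ = 1 ∧ ‖v₂‖ = 1 ∧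
      v₁ ∈ (V₁ ⊓ V₂)ᗮ ∧ v₂ ∈ (V₁ ⊓ V₂)ᗮ ∧ r = |⟪v₁, v₂⟫|} := by
  refine ⟨1, fun r hr => ?_⟩
  obtain ⟨v₁, v₂, _, _, h1, h2, _, _, rfl⟩ := hr
  calc |⟪v₁, v₂⟫| ≤ ‖v₁‖ * ‖v₂‖ := abs_real_inner_le_norm _ _
    _ = 1 := by rw [h1, h2, one_mul]

lemma friedrichsCos_nonneg (V₁ V₂ : Submodule ℝ H) : 0 ≤ friedrichsCos V₁ V₂ :=
  Real.sSup_nonneg (by rintro r ⟨v₁, v₂, _, _, _, _, _, _, rfl⟩; exact abs_nonneg _)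

lemma inner_le_fc {A B : Submodule ℝ H} {x y : H} (hx : x ∈ A) (hy : y ∈ B)
    (hx' : x ∈ (A ⊓ B)ᗮ) (hy' : y ∈ (A ⊓ B)ᗮ) :
    |⟪x, y⟫| ≤ friedrichsCos A B * (‖x‖ * ‖y‖) := by
  rcases eq_or_ne x 0 with rfl | hx0
  · simp
  rcases eq_or_ne y 0 with rfl | hy0
  · simp
  have hxn : (0:ℝ) < ‖x‖ := norm_pos_iff.mpr hx0
  have hyn : (0:ℝ) < ‖y‖ := norm_pos_iff.mpr hy0
  have hmem : |⟪‖x‖⁻¹ • x, ‖y‖⁻¹ • y⟫| ∈ {r : ℝ | ∃ v₁ v₂ : H, v₁ ∈ A ∧ v₂ ∈ B ∧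
      ‖v₁‖ = 1 ∧ ‖v₂‖ = 1 ∧ v₁ ∈ (A ⊓ B)ᗮ ∧ v₂ ∈ (A ⊓ B)ᗮ ∧ r = |⟪v₁, v₂⟫|} :=
    ⟨_, _, A.smul_mem _ hx, B.smul_mem _ hy, norm_smul_inv_norm hx0, norm_smul_inv_norm hy0,
      Submodule.smul_mem _ _ hx', Submodule.smul_mem _ _ hy', rfl⟩
  have hle := le_csSup (fcSet_bddAbove A B) hmem
  have hkey : |⟪‖x‖⁻¹ • x, ‖y‖⁻¹ • y⟫| = ‖x‖⁻¹ * (‖y‖⁻¹ * |⟪x, y⟫|) := by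
    rw [real_inner_smul_left, real_inner_smul_right, abs_mul, abs_mul, abs_inv, abs_norm,
      abs_inv, abs_norm]
  rw [hkey] at hle
  calc |⟪x, y⟫| = ‖x‖ * ‖y‖ * (‖x‖⁻¹ * (‖y‖⁻¹ * |⟪x, y⟫|)) := by field_simp
    _ ≤ ‖x‖ * ‖y‖ * friedrichsCos A B := by
        exact mul_le_mul_of_nonneg_left hle (by positivity)
    _ = friedrichsCos A B * (‖x‖ * ‖y‖) := by ring

lemma inner_le_fc' {A B : Submodule ℝ H} [CompleteSpace H]
    (hW : IsClosed ((A ⊓ B : Submodule ℝ H) : Set H))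
    {x y : H} (hx : x ∈ A) (hy : y ∈ B) (hy' : y ∈ (A ⊓ B)ᗮ) :
    |⟪x, y⟫| ≤ friedrichsCos A B * (‖x‖ * ‖y‖) := by
  haveI : CompleteSpace (A ⊓ B : Submodule ℝ H) := hW.completeSpace_coe
  set p : H := (Submodule.orthogonalProjectionOnto (A ⊓ B) x : H) with hp
  have hpmem : p ∈ A ⊓ B := (Submodule.orthogonalProjectionOnto (A ⊓ B) x).2
  have hx' : x - p ∈ (A ⊓ B)ᗮ := Submodule.sub_starProjection_mem_orthogonal x
  have h0 : ⟪p, y⟫ = 0 := (Submodule.mem_orthogonal _ _).1 hy' p hpmem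
  have hinner : ⟪x, y⟫ = ⟪x - p, y⟫ := by rw [inner_sub_left, h0, sub_zero]
  have h0' : ⟪x - p, p⟫ = 0 := by
    have := (Submodule.mem_orthogonal _ _).1 hx' p hpmem
    rwa [real_inner_comm] at this
  have hsq : ‖x‖ ^ 2 = ‖x - p‖ ^ 2 + 2 * ⟪x - p, p⟫ + ‖p‖ ^ 2 := by
    rw [← norm_add_sq_real, sub_add_cancel]
  have hnle : ‖x - p‖ ≤ ‖x‖ := by
    nlinarith [norm_nonneg (x - p), norm_nonneg x, norm_nonneg p]
  have hxA : x - p ∈ A := A.sub_mem hx (Submodule.mem_inf.1 hpmem).1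
  calc |⟪x, y⟫| = |⟪x - p, y⟫| := by rw [hinner]
    _ ≤ friedrichsCos A B * (‖x - p‖ * ‖y‖) := inner_le_fc hxA hy hx' hy'
    _ ≤ friedrichsCos A B * (‖x‖ * ‖y‖) := by
        gcongr
        exact friedrichsCos_nonneg A B

end Aux

set_option maxHeartbeats 800000 in
theorem cos_angle_sum_sq_bound
    {H : Type*} [NormedAddCommGroup H] [InnerProductSpace ℝ H] [CompleteSpace H]
    (V₁ V₂ V₃ : Submodule ℝ H)
    (hV₁ : IsClosed (V₁ : Set H)) (hV₂ : IsClosed (V₂ : Set H)) (hV₃ : IsClosed (V₃ : Set H))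
    (hsum : IsClosed ((V₁ ⊔ V₂ : Submodule ℝ H) : Set H))
    (hε : friedrichsCos V₁ V₂ < 1) :
    friedrichsCos (V₁ ⊔ V₂) V₃ ^ 2 ≤
      (friedrichsCos V₁ V₃ ^ 2 + friedrichsCos V₂ V₃ ^ 2 +
        2 * friedrichsCos V₁ V₂ * friedrichsCos V₂ V₃ * friedrichsCos V₁ V₃) /
        (1 - friedrichsCos V₁ V₂ ^ 2) := by
  set ε := friedrichsCos V₁ V₂ with hεdef
  set ε₁₃ := friedrichsCos V₁ V₃ with hε₁₃def
  set ε₂₃ := friedrichsCos V₂ V₃ with hε₂₃def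
  have hε0 : 0 ≤ ε := friedrichsCos_nonneg V₁ V₂
  have hε₁₃0 : 0 ≤ ε₁₃ := friedrichsCos_nonneg V₁ V₃
  have hε₂₃0 : 0 ≤ ε₂₃ := friedrichsCos_nonneg V₂ V₃
  have hden : (0:ℝ) < 1 - ε ^ 2 := by nlinarith
  set C : ℝ := (ε₁₃ ^ 2 + ε₂₃ ^ 2 + 2 * ε * ε₂₃ * ε₁₃) / (1 - ε ^ 2) with hCdef
  have hC0 : 0 ≤ C := by
    apply div_nonneg _ hden.le
    positivity
  have hmain : friedrichsCos (V₁ ⊔ V₂) V₃ ≤ Real.sqrt C := by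
    apply Real.sSup_le _ (Real.sqrt_nonneg _)
    rintro r ⟨u, v, hu, hv, hnu, hnv, hu', hv', rfl⟩
    -- decompose u
    obtain ⟨x, hx, y, hy, hxy⟩ := Submodule.mem_sup.1 hu
    have hWc : IsClosed ((V₁ ⊓ V₂ : Submodule ℝ H) : Set H) := by
      rw [Submodule.coe_inf]; exact hV₁.inter hV₂
    haveI : CompleteSpace (V₁ ⊓ V₂ : Submodule ℝ H) := hWc.completeSpace_coe
    set p : H := (Submodule.orthogonalProjectionOnto (V₁ ⊓ V₂) y : H) with hp
    have hpmem : p ∈ V₁ ⊓ V₂ := (Submodule.orthogonalProjectionOnto (V₁ ⊓ V₂) y).2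
    set u₁ : H := x + p with hu₁def
    set u₂ : H := y - p with hu₂def
    have hu₁ : u₁ ∈ V₁ := V₁.add_mem hx (Submodule.mem_inf.1 hpmem).1
    have hu₂ : u₂ ∈ V₂ := V₂.sub_mem hy (Submodule.mem_inf.1 hpmem).2
    have hu₂' : u₂ ∈ (V₁ ⊓ V₂)ᗮ := Submodule.sub_starProjection_mem_orthogonal y
    have hueq : u = u₁ + u₂ := by rw [hu₁def, hu₂def, ← hxy]; abel
    -- v is orthogonal to the small intersections
    have hv₁₃ : v ∈ (V₁ ⊓ V₃)ᗮ :=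
      Submodule.orthogonal_le (inf_le_inf_right V₃ le_sup_left) hv'
    have hv₂₃ : v ∈ (V₂ ⊓ V₃)ᗮ :=
      Submodule.orthogonal_le (inf_le_inf_right V₃ le_sup_right) hv'
    have hc₁₃ : IsClosed ((V₁ ⊓ V₃ : Submodule ℝ H) : Set H) := by
      rw [Submodule.coe_inf]; exact hV₁.inter hV₃
    have hc₂₃ : IsClosed ((V₂ ⊓ V₃ : Submodule ℝ H) : Set H) := by
      rw [Submodule.coe_inf]; exact hV₂.inter hV₃
    set a := ‖u₁‖ with ha
    set b := ‖u₂‖ with hb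
    have ha0 : 0 ≤ a := norm_nonneg _
    have hb0 : 0 ≤ b := norm_nonneg _
    have h1 : |⟪u₁, v⟫| ≤ ε₁₃ * a := by
      have := inner_le_fc' hc₁₃ hu₁ hv hv₁₃
      rwa [hnv, mul_one] at this
    have h2 : |⟪u₂, v⟫| ≤ ε₂₃ * b := by
      have := inner_le_fc' hc₂₃ hu₂ hv hv₂₃
      rwa [hnv, mul_one] at this
    have h3 : |⟪u₁, u₂⟫| ≤ ε * (a * b) := inner_le_fc' hWc hu₁ hu₂ hu₂'
    have hnorm1 : a ^ 2 + b ^ 2 + 2 * ⟪u₁, u₂⟫ = 1 := by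
      have : ‖u₁ + u₂‖ ^ 2 = ‖u₁‖ ^ 2 + 2 * ⟪u₁, u₂⟫ + ‖u₂‖ ^ 2 := norm_add_sq_real u₁ u₂
      rw [← hueq, hnu] at this
      rw [ha, hb]; linarith [this]
    have hr1 : |⟪u, v⟫| ≤ ε₁₃ * a + ε₂₃ * b := by
      calc |⟪u, v⟫| = |⟪u₁, v⟫ + ⟪u₂, v⟫| := by rw [hueq, inner_add_left]
        _ ≤ |⟪u₁, v⟫| + |⟪u₂, v⟫| := abs_add_le _ _
        _ ≤ ε₁₃ * a + ε₂₃ * b := add_le_add h1 h2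
    rw [Real.le_sqrt (abs_nonneg _), hCdef, le_div_iff₀ hden]
    have hinlb : -(ε * (a * b)) ≤ ⟪u₁, u₂⟫ := neg_le_of_abs_le h3
    have hab1 : a ^ 2 + b ^ 2 - 2 * ε * (a * b) ≤ 1 := by linarith
    have hm2 : |⟪u, v⟫| ^ 2 ≤ (ε₁₃ * a + ε₂₃ * b) ^ 2 := by
      nlinarith [abs_nonneg ⟪u, v⟫]
    set N : ℝ := ε₁₃ ^ 2 + ε₂₃ ^ 2 + 2 * ε * ε₂₃ * ε₁₃ with hNdef
    have hN0 : 0 ≤ N := by positivity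
    have hkey : (ε₁₃ * a + ε₂₃ * b) ^ 2 * (1 - ε ^ 2) ≤ N * (a ^ 2 + b ^ 2 - 2 * ε * (a * b)) := by
      have hiden : N * (a ^ 2 + b ^ 2 - 2 * ε * (a * b)) -
          (ε₁₃ * a + ε₂₃ * b) ^ 2 * (1 - ε ^ 2) =
          ((ε₂₃ + ε * ε₁₃) * a - (ε₁₃ + ε * ε₂₃) * b) ^ 2 := by rw [hNdef]; ring
      linarith [sq_nonneg ((ε₂₃ + ε * ε₁₃) * a - (ε₁₃ + ε * ε₂₃) * b)]
    have hfin : N * (a ^ 2 + b ^ 2 - 2 * ε * (a * b)) ≤ N * 1 :=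
      mul_le_mul_of_nonneg_left hab1 hN0
    have hstep : |⟪u, v⟫| ^ 2 * (1 - ε ^ 2) ≤ (ε₁₃ * a + ε₂₃ * b) ^ 2 * (1 - ε ^ 2) :=
      mul_le_mul_of_nonneg_right hm2 hden.le
    linarith
    exact hC0
  calc friedrichsCos (V₁ ⊔ V₂) V₃ ^ 2 ≤ Real.sqrt C ^ 2 := by
        apply pow_le_pow_left₀ (friedrichsCos_nonneg _ _) hmain
    _ = C := Real.sq_sqrt hC0
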